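/- For every irreducible and aperiodic (primitive) stochastic matrix A of size n×n with n ≥ 1, all entries of the matrix power A^(n²−2n+2) are strictly positive. -/

import Mathlib

open Matrix Finset

namespace WielandtAux


variable {n : ℕ}

/-- `p` is a walk of length `k` in the digraph of `M`. -/
def IsWalk (M : Matrix (Fin n) (Fin n) ℝ) (k : ℕ) (p : ℕ → Fin n) : Prop :=
  ∀ t < k, 0 < M (p t) (p (t+1))

lemma pow_nonneg (M : Matrix (Fin n) (Fin n) ℝ) (hM : ∀ i j, 0 ≤ M i j) (k : ℕ) :
    ∀ i j, 0 ≤ (M ^ k) i j := by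
  induction k with
  | zero => intro i j; simp [Matrix.one_apply]; split <;> norm_num
  | succ k ih =>
      intro i j
      rw [pow_succ, Matrix.mul_apply]
      exact Finset.sum_nonneg fun m _ => mul_nonneg (ih i m) (hM m j)

lemma pow_mul_pos (M : Matrix (Fin n) (Fin n) ℝ) (hM : ∀ i j, 0 ≤ M i j)
    {a b : ℕ} {i m j : Fin n} (ha : 0 < (M ^ a) i m) (hb : 0 < (M ^ b) m j) :
    0 < (M ^ (a + b)) i j := by
  rw [pow_add, Matrix.mul_apply]
  have h1 : (M ^ a) i m * (M ^ b) m j ≤ ∑ x, (M ^ a) i x * (M ^ b) x j :=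
    Finset.single_le_sum (fun x _ => mul_nonneg (pow_nonneg M hM a i x) (pow_nonneg M hM b x j))
      (Finset.mem_univ m)
  exact lt_of_lt_of_le (mul_pos ha hb) h1

lemma pos_of_walk (M : Matrix (Fin n) (Fin n) ℝ) (hM : ∀ i j, 0 ≤ M i j)
    {k : ℕ} {p : ℕ → Fin n} (h : IsWalk M k p) : 0 < (M ^ k) (p 0) (p k) := by
  induction k with
  | zero => simp [Matrix.one_apply]
  | succ k ih =>
      have h1 : 0 < (M ^ k) (p 0) (p k) := ih (fun t ht => h t (Nat.lt_succ_of_lt ht))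
      have h2 : 0 < (M ^ 1) (p k) (p (k+1)) := by
        simpa using h k (Nat.lt_succ_self k)
      simpa using pow_mul_pos M hM h1 h2

lemma walk_of_pos (M : Matrix (Fin n) (Fin n) ℝ) (hM : ∀ i j, 0 ≤ M i j)
    {k : ℕ} {i j : Fin n} (h : 0 < (M ^ k) i j) :
    ∃ p : ℕ → Fin n, p 0 = i ∧ p k = j ∧ IsWalk M k p := by
  induction k generalizing j with
  | zero =>
      have hij : i = j := by
        by_contra hne
        rw [pow_zero, Matrix.one_apply_ne hne] at h
        exact lt_irrefl _ h
      exact ⟨fun _ => i, rfl, hij, fun t ht => absurd ht (Nat.not_lt_zero t)⟩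
  | succ k ih =>
      rw [pow_succ, Matrix.mul_apply] at h
      have hex : ∃ m, 0 < (M ^ k) i m * M m j := by
        by_contra hc
        push_neg at hc
        have : ∑ m, (M ^ k) i m * M m j ≤ 0 := Finset.sum_nonpos fun m _ => hc m
        linarith
      obtain ⟨m, hm⟩ := hex
      have h1 : 0 < (M ^ k) i m := by
        rcases lt_or_eq_of_le (pow_nonneg M hM k i m) with h' | h'
        · exact h'
        · rw [← h'] at hm; simp at hm
      have h2 : 0 < M m j := by
        rcases lt_or_eq_of_le (hM m j) with h' | h'
        · exact h'
        · rw [← h'] at hm; simp at hm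
      obtain ⟨p, hp0, hpk, hpw⟩ := ih h1
      refine ⟨fun t => if t ≤ k then p t else j, ?_, ?_, ?_⟩
      · beta_reduce; rw [if_pos (Nat.zero_le k)]; exact hp0
      · beta_reduce; rw [if_neg (by omega)]
      intro t ht
      beta_reduce
      rcases Nat.lt_or_ge t k with h' | h'
      · rw [if_pos (Nat.le_of_lt h'), if_pos (by omega)]
        exact hpw t h'
      · have htk : t = k := Nat.le_antisymm (Nat.lt_succ_iff.mp ht) h'
        subst htk
        rw [if_pos (le_refl t), if_neg (by omega)]
        rw [hpk]; exact h2

/-- segment of a walk -/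
lemma walk_segment (M : Matrix (Fin n) (Fin n) ℝ) {k a l : ℕ} {p : ℕ → Fin n}
    (h : IsWalk M k p) (hal : a + l ≤ k) : IsWalk M l (fun t => p (a + t)) := by
  intro t ht
  have := h (a + t) (by omega)
  beta_reduce
  have he : a + (t + 1) = a + t + 1 := by omega
  rw [he]
  exact this

/-- cutting a walk at a repeated vertex -/
lemma walk_cut (M : Matrix (Fin n) (Fin n) ℝ) {k a b : ℕ} {p : ℕ → Fin n}
    (h : IsWalk M k p) (hab : a < b) (hbk : b ≤ k) (heq : p a = p b) :
    ∃ q : ℕ → Fin n, IsWalk M (k - (b - a)) q ∧ q 0 = p 0 ∧ q (k - (b - a)) = p k ∧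
      ∀ t ≤ k - (b - a), ∃ t' ≤ k, q t = p t' := by
  refine ⟨fun t => if t ≤ a then p t else p (t + (b - a)), ?_, ?_, ?_, ?_⟩
  · intro t ht
    beta_reduce
    rcases Nat.lt_or_ge t a with h1 | h1
    · rw [if_pos (Nat.le_of_lt h1), if_pos (by omega)]
      exact h t (by omega)
    · rcases Nat.eq_or_lt_of_le h1 with h2 | h2
      · rw [if_pos (le_of_eq h2.symm), if_neg (by omega), ← h2, heq]
        have he : a + 1 + (b - a) = b + 1 := by omega
        rw [he]
        exact h b (by omega)
      · rw [if_neg (by omega), if_neg (by omega)]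
        have he : t + 1 + (b - a) = t + (b - a) + 1 := by omega
        rw [he]
        exact h (t + (b - a)) (by omega)
  · beta_reduce; rw [if_pos (Nat.zero_le a)]
  · beta_reduce
    rcases Nat.lt_or_ge (k - (b-a)) a with h1 | h1
    · omega
    · rcases Nat.eq_or_lt_of_le h1 with h2 | h2
      · rw [if_pos (le_of_eq h2.symm)]
        have hkb : k = b := by omega
        rw [← h2, heq, hkb]
      · rw [if_neg (by omega)]
        congr 1
        omega
  · intro t htk
    beta_reduce
    rcases Nat.lt_or_ge t a with h1 | h1
    · exact ⟨t, by omega, by rw [if_pos (Nat.le_of_lt h1)]⟩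
    · rcases Nat.eq_or_lt_of_le h1 with h2 | h2
      · exact ⟨t, by omega, by rw [if_pos (le_of_eq h2.symm)]⟩
      · exact ⟨t + (b - a), by omega, by rw [if_neg (by omega)]⟩

/-- any walk can be shortened to length ≤ n - 1 with the same endpoints -/
lemma walk_shorten (M : Matrix (Fin n) (Fin n) ℝ) {k : ℕ} {p : ℕ → Fin n}
    (h : IsWalk M k p) :
    ∃ k' ≤ n - 1, ∃ q : ℕ → Fin n, q 0 = p 0 ∧ q k' = p k ∧ IsWalk M k' q := by
  induction k using Nat.strong_induction_on generalizing p with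
  | _ k ih =>
    rcases Nat.lt_or_ge k n with hk | hk
    · exact ⟨k, by omega, p, rfl, rfl, h⟩
    · have hcard : Fintype.card (Fin n) < Fintype.card (Fin (k+1)) := by simp; omega
      obtain ⟨x, y, hxy, hpxy⟩ := Fintype.exists_ne_map_eq_of_card_lt
        (fun t : Fin (k+1) => p t) hcard
      have hwlog : ∀ (a b : ℕ), a < b → b ≤ k → p a = p b →
          ∃ k' ≤ n - 1, ∃ q : ℕ → Fin n, q 0 = p 0 ∧ q k' = p k ∧ IsWalk M k' q := by
        intro a b hab hbk heq
        obtain ⟨q, hw, h0, hkend, _⟩ := walk_cut M h hab hbk heq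
        obtain ⟨k', hk'le, r, hr0, hrk, hrw⟩ := ih (k - (b - a)) (by omega) hw
        exact ⟨k', hk'le, r, by rw [hr0, h0], by rw [hrk, hkend], hrw⟩
      rcases Nat.lt_or_ge (x : ℕ) (y : ℕ) with hlt | hge
      · exact hwlog x y hlt (Nat.lt_succ_iff.mp y.isLt) hpxy
      · have hlt : (y:ℕ) < (x:ℕ) := by
          rcases Nat.lt_or_ge (y:ℕ) (x:ℕ) with h' | h'
          · exact h'
          · exact absurd (Fin.ext (by omega : (x:ℕ) = y)) hxy
        exact hwlog y x hlt (Nat.lt_succ_iff.mp x.isLt) hpxy.symm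



/-- a nonempty additively-closed set of naturals whose only common divisor is 1
contains all sufficiently large naturals -/
lemma nat_semigroup_cofinite (S : Set ℕ)
    (hadd : ∀ a ∈ S, ∀ b ∈ S, a + b ∈ S)
    (hpos : ∀ a ∈ S, 1 ≤ a)
    (hne : ∃ a, a ∈ S)
    (hgcd : ∀ d : ℕ, (∀ k ∈ S, d ∣ k) → d = 1) :
    ∃ N, ∀ m ≥ N, m ∈ S := by
  -- multiples
  have hmul : ∀ c ∈ S, ∀ k : ℕ, 1 ≤ k → k * c ∈ S := by
    intro c hc k hk
    induction k with
    | zero => omega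
    | succ k ih =>
        rcases Nat.eq_or_lt_of_le hk with h | h
        · simpa [← h] using hc
        · have := ih (by omega)
          have : k * c + c ∈ S := hadd _ this _ hc
          simpa [Nat.succ_mul] using this
  -- the subgroup of ℤ generated by S
  set T : Set ℤ := ((↑) : ℕ → ℤ) '' S with hT
  obtain ⟨g, hg⟩ := Int.subgroup_cyclic (AddSubgroup.closure T)
  have hgdvd : ∀ k ∈ S, g.natAbs ∣ k := by
    intro k hk
    have h1 : (k : ℤ) ∈ AddSubgroup.closure T := AddSubgroup.subset_closure ⟨k, hk, rfl⟩
    rw [hg] at h1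
    have h2 : g ∣ (k : ℤ) := by
      rw [AddSubgroup.mem_closure_singleton] at h1
      obtain ⟨z, hz⟩ := h1
      exact Dvd.intro_left z (by rw [← hz, zsmul_eq_mul, Int.cast_id])
    have := Int.natAbs_dvd_natAbs.mpr h2
    simpa using this
  have hg1 : g.natAbs = 1 := hgcd _ hgdvd
  -- 1 is in the subgroup closure
  have hone : (1 : ℤ) ∈ AddSubgroup.closure T := by
    rw [hg, AddSubgroup.mem_closure_singleton]
    refine ⟨g, ?_⟩
    rw [zsmul_eq_mul, Int.cast_id]
    rcases Int.natAbs_eq g with h | h <;> rw [h, hg1] <;> norm_num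
  -- every element of the closure is a difference of elements of S ∪ {0}
  have hrep : ∀ x ∈ AddSubgroup.closure T,
      ∃ u v : ℕ, (u ∈ S ∨ u = 0) ∧ (v ∈ S ∨ v = 0) ∧ x = (u : ℤ) - v := by
    intro x hx
    induction hx using AddSubgroup.closure_induction with
    | mem y hy =>
        obtain ⟨u, hu, rfl⟩ := hy
        exact ⟨u, 0, Or.inl hu, Or.inr rfl, by simp⟩
    | zero => exact ⟨0, 0, Or.inr rfl, Or.inr rfl, by simp⟩
    | add y z hy hz ihy ihz =>
        obtain ⟨u1, v1, hu1, hv1, rfl⟩ := ihy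
        obtain ⟨u2, v2, hu2, hv2, rfl⟩ := ihz
        refine ⟨u1 + u2, v1 + v2, ?_, ?_, by push_cast; ring⟩
        · rcases hu1 with h1 | h1 <;> rcases hu2 with h2 | h2
          · exact Or.inl (hadd _ h1 _ h2)
          · subst h2; simpa using Or.inl h1
          · subst h1; simpa using Or.inl h2
          · subst h1; subst h2; simp
        · rcases hv1 with h1 | h1 <;> rcases hv2 with h2 | h2
          · exact Or.inl (hadd _ h1 _ h2)
          · subst h2; simpa using Or.inl h1
          · subst h1; simpa using Or.inl h2
          · subst h1; subst h2; simp
    | neg y hy ihy =>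
        obtain ⟨u, v, hu, hv, rfl⟩ := ihy
        exact ⟨v, u, hv, hu, by ring⟩
  obtain ⟨u, v, hu, hv, huv⟩ := hrep 1 hone
  have huv' : u = v + 1 := by omega
  have huS : u ∈ S := by
    rcases hu with h | h
    · exact h
    · omega
  rcases hv with hvS | hv0
  · -- v ≥ 1, v and v+1 both in S
    have hv1 : 1 ≤ v := hpos v hvS
    refine ⟨v * v + 1, fun m hm => ?_⟩
    obtain ⟨q, r, hr, hqr⟩ : ∃ q r, r < v ∧ m = v * q + r :=
      ⟨m / v, m % v, Nat.mod_lt _ (by omega), by rw [Nat.div_add_mod]⟩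
    have hq : r < q := by
      rcases Nat.lt_or_ge r q with h | h
      · exact h
      · exfalso; nlinarith
    have hm1 : m = (q - r) * v + r * (v + 1) := by
      have : q - r + r = q := by omega
      nlinarith [Nat.sub_add_cancel (le_of_lt hq)]
    rcases Nat.eq_zero_or_pos r with hr0 | hr0
    · subst hr0
      rw [hm1]
      simpa using hmul v hvS q (by omega)
    · rw [hm1]
      exact hadd _ (hmul v hvS (q - r) (by omega)) _
        (hmul (v + 1) (huv' ▸ huS) r hr0)
  · -- 1 ∈ S
    subst hv0
    have h1S : 1 ∈ S := by simpa [huv'] using huS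
    refine ⟨1, fun m hm => ?_⟩
    simpa using hmul 1 h1S m hm


lemma loop_pow (M : Matrix (Fin n) (Fin n) ℝ) (hM : ∀ i j, 0 ≤ M i j)
    {x : Fin n} (hx : 0 < M x x) (d : ℕ) : 0 < (M ^ d) x x := by
  induction d with
  | zero => simp [Matrix.one_apply]
  | succ d ih =>
      have h1 : 0 < (M ^ 1) x x := by simpa using hx
      exact pow_mul_pos M hM ih h1

/-- qualitative primitivity -/
lemma qualitative (A : Matrix (Fin n) (Fin n) ℝ)
    (hnonneg : ∀ i j, 0 ≤ A i j)
    (hirr : ∀ i j, ∃ k, 1 ≤ k ∧ 0 < (A ^ k) i j)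
    (haper : ∀ i, ∀ d : ℕ, (∀ k, 1 ≤ k → 0 < (A ^ k) i i → d ∣ k) → d = 1) :
    ∃ N, ∀ m ≥ N, ∀ i j, 0 < (A ^ m) i j := by
  classical
  have hS : ∀ i : Fin n, ∃ N, ∀ m ≥ N, m ∈ {k : ℕ | 1 ≤ k ∧ 0 < (A ^ k) i i} := by
    intro i
    apply nat_semigroup_cofinite
    · rintro a ⟨ha1, ha2⟩ b ⟨hb1, hb2⟩
      exact ⟨by omega, pow_mul_pos A hnonneg ha2 hb2⟩
    · rintro a ⟨ha1, _⟩; exact ha1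
    · exact hirr i i
    · intro d hd
      exact haper i d (fun k hk hp => hd k ⟨hk, hp⟩)
  choose Nf hNf using hS
  choose kf hkf using fun i j => hirr i j
  set K := Finset.univ.sup (fun p : Fin n × Fin n => kf p.1 p.2) with hK
  set NN := Finset.univ.sup Nf with hNN
  refine ⟨K + NN + 1, fun m hm i j => ?_⟩
  have hkK : kf i j ≤ K := Finset.le_sup (f := fun p : Fin n × Fin n => kf p.1 p.2)
    (Finset.mem_univ (i, j))
  have hNj : Nf j ≤ NN := Finset.le_sup (Finset.mem_univ j)
  have hmem : (m - kf i j) ∈ {k : ℕ | 1 ≤ k ∧ 0 < (A ^ k) j j} :=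
    hNf j (m - kf i j) (by omega)
  have h2 := pow_mul_pos A hnonneg (hkf i j).2 hmem.2
  have he : kf i j + (m - kf i j) = m := by omega
  rwa [he] at h2

end WielandtAux

open WielandtAux in
theorem wielandt_primitive_power_pos (n : ℕ) (hn : 1 ≤ n)
    (A : Matrix (Fin n) (Fin n) ℝ)
    (hnonneg : ∀ i j, 0 ≤ A i j)
    (hrow : ∀ i, ∑ j, A i j = 1)
    (hirr : ∀ i j, ∃ k, 1 ≤ k ∧ 0 < (A ^ k) i j)
    (haper : ∀ i, ∀ d : ℕ, (∀ k, 1 ≤ k → 0 < (A ^ k) i i → d ∣ k) → d = 1) :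
    ∀ i j, 0 < (A ^ (n ^ 2 - 2 * n + 2)) i j := by
  classical
  -- each row has a positive entry
  have hrowpos : ∀ i, ∃ m, 0 < A i m := by
    intro i
    by_contra hc
    push_neg at hc
    have : ∑ j, A i j = 0 :=
      le_antisymm (Finset.sum_nonpos fun j _ => hc j) (Finset.sum_nonneg fun j _ => hnonneg i j)
    rw [hrow i] at this
    norm_num at this
  -- padding: once all entries positive, stays positive
  have hpad : ∀ L, (∀ i j, 0 < (A ^ L) i j) → ∀ d i j, 0 < (A ^ (L + d)) i j := by
    intro L hL d
    induction d with
    | zero => simpa using hL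
    | succ d ih =>
        intro i j
        obtain ⟨m, hm⟩ := hrowpos i
        have h1 : 0 < (A ^ 1) i m := by simpa using hm
        have := pow_mul_pos A hnonneg h1 (ih m j)
        have he : 1 + (L + d) = L + (d + 1) := by omega
        rwa [he] at this
  -- the case n = 1
  rcases Nat.eq_or_lt_of_le hn with h1 | h2
  · intro i j
    have hA : ∀ i j : Fin n, 0 < A i j := by
      intro i j
      have hsum := hrow i
      have : (Finset.univ : Finset (Fin n)) = {j} := by
        apply Finset.eq_singleton_iff_unique_mem.mpr
        exact ⟨Finset.mem_univ j, fun x _ => by omega⟩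
      rw [this, Finset.sum_singleton] at hsum
      rw [hsum]; norm_num
    have hn1 : n = 1 := h1.symm
    have hT : n ^ 2 - 2 * n + 2 = 1 + 1 := by subst hn1; norm_num
    rw [hT]
    have h1' : 0 < (A ^ 1) i i := by simpa using hA i i
    have h2' : 0 < (A ^ 1) i j := by simpa using hA i j
    exact pow_mul_pos A hnonneg h1' h2'
  -- main case: n ≥ 2
  have hn2 : 2 ≤ n := h2
  -- shortest closed walk
  have hex : ∃ k, 1 ≤ k ∧ ∃ i : Fin n, 0 < (A ^ k) i i := by
    obtain ⟨k, hk1, hk2⟩ := hirr ⟨0, by omega⟩ ⟨0, by omega⟩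
    exact ⟨k, hk1, ⟨0, by omega⟩, hk2⟩
  set s := Nat.find hex with hs_def
  obtain ⟨hs1, i₀, hi₀⟩ : 1 ≤ s ∧ ∃ i : Fin n, 0 < (A ^ s) i i := Nat.find_spec hex
  have hmin : ∀ k, k < s → ¬(1 ≤ k ∧ ∃ i : Fin n, 0 < (A ^ k) i i) :=
    fun k hk => Nat.find_min hex hk
  obtain ⟨q, hq0, hqs, hqw⟩ := walk_of_pos A hnonneg hi₀
  -- injectivity of the cycle
  have hinj : ∀ a b, a < b → b ≤ s → ¬(a = 0 ∧ b = s) → q a ≠ q b := by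
    intro a b hab hbs hne heq
    have hw := walk_segment A hqw (show a + (b - a) ≤ s by omega)
    have hp := pos_of_walk A hnonneg hw
    simp only [Nat.add_zero] at hp
    have he : a + (b - a) = b := by omega
    rw [he, ← heq] at hp
    have hlt : b - a < s := by omega
    exact hmin (b - a) hlt ⟨by omega, q a, hp⟩
  have hinj' : ∀ a b, a < s → b < s → q a = q b → a = b := by
    intro a b ha hb heq
    by_contra hne
    rcases Nat.lt_or_ge a b with h | h
    · exact hinj a b h (by omega) (by omega) heq
    · exact hinj b a (by omega) (by omega) (by omega) heq.symm
  have hsn : s ≤ n := by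
    have : Function.Injective (fun t : Fin s => q t) := by
      intro a b hab
      exact Fin.ext (hinj' a b a.isLt b.isLt hab)
    have := Fintype.card_le_of_injective _ this
    simpa using this
  -- mod helper
  have hmodg : ∀ c w : ℕ, (w + 1) % c = (w % c + 1) % c := by
    intro c w
    conv_lhs => rw [Nat.add_mod]
    conv_rhs => rw [Nat.add_mod]
    simp [Nat.mod_mod_of_dvd, Nat.mod_mod]
  have hmod1 : ∀ w : ℕ, (w + 1) % s = (w % s + 1) % s := hmodg s
  -- cyclic edges
  have hcyc : ∀ w : ℕ, 0 < A (q (w % s)) (q ((w + 1) % s)) := by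
    intro w
    have hr : w % s < s := Nat.mod_lt _ (by omega)
    rcases Nat.lt_or_ge (w % s + 1) s with h | h
    swap
    · have h : w % s + 1 = s := by omega
      have h0 : (w + 1) % s = 0 := by rw [hmod1, h, Nat.mod_self]
      rw [h0]
      have hthis := hqw (w % s) hr
      rw [h, hqs, ← hq0] at hthis
      exact hthis
    · have h0 : (w + 1) % s = w % s + 1 := by rw [hmod1]; exact Nat.mod_eq_of_lt h
      rw [h0]
      exact hqw (w % s) hr
  -- rule out s = n
  have hslt : s < n := by
    rcases Nat.lt_or_ge s n with hlt | hge
    · exact hlt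
    exfalso
    have hsn' : s = n := by omega
    have hqinj : Function.Injective (fun t : Fin n => q t) := by
      intro a b hab
      exact Fin.ext (hinj' a b (by have := a.isLt; omega) (by have := b.isLt; omega) hab)
    have hedge : ∀ a : ℕ, a < n → ∀ v : Fin n, 0 < A (q a) v → v = q ((a + 1) % n) := by
      intro a ha v hv
      obtain ⟨b, hb⟩ := Finite.injective_iff_surjective.mp hqinj v
      set m := (n + a - (b : ℕ)) % n with hm
      have hbn : (b : ℕ) < n := b.isLt
      have hbm : ((b : ℕ) + m) % n = a := by
        rw [hm]
        have h1 : ((b:ℕ) + (n + a - b) % n) % n = ((b:ℕ) + (n + a - b)) % n := by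
          conv_rhs => rw [Nat.add_mod]
          conv_lhs => rw [Nat.add_mod]
          simp [Nat.mod_mod_of_dvd, Nat.mod_mod]
        rw [h1]
        have h2 : (b:ℕ) + (n + a - b) = n + a := by omega
        rw [h2, Nat.add_mod_left, Nat.mod_eq_of_lt ha]
      have hmlt : m < n := Nat.mod_lt _ (by omega)
      have hrw : IsWalk A (1 + m) (fun u => if u = 0 then q a else q (((b:ℕ) + (u - 1)) % n)) := by
        intro t ht
        beta_reduce
        rcases Nat.eq_zero_or_pos t with h0 | h0
        · subst h0
          rw [if_pos rfl, if_neg (by omega)]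
          have he : ((b:ℕ) + (0 + 1 - 1)) % n = (b:ℕ) := by
            simp [Nat.mod_eq_of_lt hbn]
          rw [he]
          have hb' : q (b:ℕ) = v := hb
          rw [hb']
          exact hv
        · rw [if_neg (by omega), if_neg (by omega)]
          have e1 : (b:ℕ) + (t + 1 - 1) = ((b:ℕ) + (t - 1)) + 1 := by omega
          rw [e1]
          have hc := hcyc ((b:ℕ) + (t - 1))
          rw [hsn'] at hc
          exact hc
      have hpos := pos_of_walk A hnonneg hrw
      have h00 : (if (0:ℕ) = 0 then q a else q (((b:ℕ) + (0 - 1)) % n)) = q a := by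
        rw [if_pos rfl]
      have h11 : (if 1 + m = 0 then q a else q (((b:ℕ) + (1 + m - 1)) % n)) = q a := by
        rw [if_neg (by omega)]
        have he : (b:ℕ) + (1 + m - 1) = (b:ℕ) + m := by omega
        rw [he, hbm]
      rw [h00, h11] at hpos
      have hge' : ¬ (1 + m < s) := fun hc => hmin (1+m) hc ⟨by omega, q a, hpos⟩
      have hmval : m = n - 1 := by omega
      have hab : (a + 1) % n = (b:ℕ) :=
        calc (a + 1) % n = (((b:ℕ) + m) % n + 1) % n := by rw [hbm]
          _ = (((b:ℕ) + m) + 1) % n := (hmodg n _).symm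
          _ = ((b:ℕ) + n) % n := by rw [hmval]; congr 1; omega
          _ = (b:ℕ) % n := by rw [Nat.add_mod_right]
          _ = (b:ℕ) := Nat.mod_eq_of_lt hbn
      rw [hab]
      exact hb.symm
    have hfollow : ∀ k (p : ℕ → Fin n), IsWalk A k p → p 0 = q 0 → ∀ t, t ≤ k → p t = q (t % n) := by
      intro k p hpw hp0 t
      induction t with
      | zero => intro _; rw [Nat.zero_mod]; exact hp0
      | succ t ih =>
          intro ht
          have h1 := ih (by omega)
          have hedge' := hpw t (by omega)
          rw [h1] at hedge'
          have h3 := hedge (t % n) (Nat.mod_lt _ (by omega)) (p (t+1)) hedge'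
          rw [h3]
          congr 1
          exact (hmodg n t).symm
    have hdvd : ∀ k, 1 ≤ k → 0 < (A ^ k) (q 0) (q 0) → n ∣ k := by
      intro k hk hpos
      obtain ⟨p, hp0, hpk, hpw⟩ := walk_of_pos A hnonneg hpos
      have h1 := hfollow k p hpw hp0 k le_rfl
      rw [hpk] at h1
      have h2 : k % n = 0 := by
        refine hinj' (k % n) 0 ?_ (by omega) h1.symm
        have := Nat.mod_lt k (show 0 < n by omega)
        omega
      exact Nat.dvd_of_mod_eq_zero h2
    have := haper (q 0) n hdvd
    omega
  -- the cycle vertex set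
  set C : Finset (Fin n) := (Finset.range s).image q with hC
  have hCcard : C.card = s := by
    rw [hC, Finset.card_image_of_injOn, Finset.card_range]
    intro a ha b hb heq
    exact hinj' a b (Finset.mem_range.mp ha) (Finset.mem_range.mp hb) heq
  have hqmem : ∀ t, t < s → q t ∈ C :=
    fun t ht => Finset.mem_image.mpr ⟨t, Finset.mem_range.mpr ht, rfl⟩
  -- from any vertex, reach the cycle in exactly n - s steps
  have hreach : ∀ i : Fin n, ∃ x ∈ C, 0 < (A ^ (n - s)) i x := by
    intro i
    have hexE : ∃ k, ∃ p : ℕ → Fin n, IsWalk A k p ∧ p 0 = i ∧ p k ∈ C := by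
      obtain ⟨k, hk1, hk2⟩ := hirr i i₀
      obtain ⟨p, hp0, hpk, hpw⟩ := walk_of_pos A hnonneg hk2
      exact ⟨k, p, hpw, hp0, by rw [hpk, ← hq0]; exact hqmem 0 (by omega)⟩
    set k := Nat.find hexE with hk_def
    obtain ⟨p, hpw, hp0, hpkC⟩ := Nat.find_spec hexE
    have hkmin : ∀ k' < k, ¬ ∃ p : ℕ → Fin n, IsWalk A k' p ∧ p 0 = i ∧ p k' ∈ C :=
      fun k' h => Nat.find_min hexE h
    have hnotC : ∀ t < k, p t ∉ C := by
      intro t ht hmem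
      exact hkmin t ht ⟨p, fun u hu => hpw u (by omega), hp0, hmem⟩
    have hdist : ∀ a b, a < b → b < k → p a ≠ p b := by
      intro a b hab hbk heq
      obtain ⟨q', hq'w, hq'0, hq'end, _⟩ := walk_cut A hpw hab (by omega) heq
      exact hkmin (k - (b-a)) (by omega)
        ⟨q', hq'w, by rw [hq'0, hp0], by rw [hq'end]; exact hpkC⟩
    have hk_le : k ≤ n - s := by
      by_contra hc
      push_neg at hc
      have hmap : ∀ t : Fin k, p t ∈ Finset.univ \ C := fun t =>
        Finset.mem_sdiff.mpr ⟨Finset.mem_univ _, hnotC t t.isLt⟩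
      have hinjf : Function.Injective
          (fun t : Fin k => (⟨p t, hmap t⟩ : {x // x ∈ Finset.univ \ C})) := by
        intro a b hab
        have heq : p (a:ℕ) = p (b:ℕ) := congrArg Subtype.val hab
        by_contra hne
        have hne' : (a:ℕ) ≠ (b:ℕ) := fun h => hne (Fin.ext h)
        rcases Nat.lt_or_ge (a:ℕ) (b:ℕ) with h | h
        · exact hdist a b h b.isLt heq
        · exact hdist b a (by omega) a.isLt heq.symm
      have hcard := Fintype.card_le_of_injective _ hinjf
      rw [Fintype.card_coe, Fintype.card_fin] at hcard
      have hsd : (Finset.univ \ C).card = n - s := by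
        rw [Finset.card_sdiff_of_subset (Finset.subset_univ C), hCcard, Finset.card_univ, Fintype.card_fin]
      omega
    obtain ⟨t0, ht0, hqt0⟩ := Finset.mem_image.mp hpkC
    have ht0' : t0 < s := Finset.mem_range.mp ht0
    have hPw : IsWalk A (n - s) (fun u => if u ≤ k then p u else q ((t0 + (u - k)) % s)) := by
      intro u hu
      beta_reduce
      rcases Nat.lt_or_ge u k with h1 | h1
      · rw [if_pos (Nat.le_of_lt h1), if_pos (by omega)]
        exact hpw u h1
      · rcases Nat.eq_or_lt_of_le h1 with h2 | h2
        · subst h2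
          rw [if_pos (le_refl k), if_neg (by omega)]
          have he : t0 + (k + 1 - k) = t0 + 1 := by omega
          rw [he]
          have hc := hcyc t0
          rw [Nat.mod_eq_of_lt ht0'] at hc
          rw [hqt0] at hc
          exact hc
        · rw [if_neg (by omega), if_neg (by omega)]
          have he : t0 + (u + 1 - k) = (t0 + (u - k)) + 1 := by omega
          rw [he]
          exact hcyc (t0 + (u - k))
    have hpos := pos_of_walk A hnonneg hPw
    have h00 : (if (0:ℕ) ≤ k then p 0 else q ((t0 + (0 - k)) % s)) = i := by
      rw [if_pos (Nat.zero_le k)]; exact hp0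
    rcases Nat.eq_or_lt_of_le hk_le with hke | hke
    · have h11 : (if n - s ≤ k then p (n - s) else q ((t0 + (n - s - k)) % s)) = p k := by
        rw [if_pos (le_of_eq hke.symm), ← hke]
      rw [h00, h11] at hpos
      exact ⟨p k, hpkC, hpos⟩
    · have h11 : (if n - s ≤ k then p (n - s) else q ((t0 + (n - s - k)) % s))
          = q ((t0 + (n - s - k)) % s) := by
        rw [if_neg (by omega)]
      rw [h00, h11] at hpos
      exact ⟨q ((t0 + (n - s - k)) % s), hqmem _ (Nat.mod_lt _ (by omega)), hpos⟩
  -- loops on the cycle for A^s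
  have hBnn : ∀ i j, 0 ≤ (A ^ s) i j := pow_nonneg A hnonneg s
  have hloop : ∀ x ∈ C, 0 < (A ^ s) x x := by
    intro x hx
    obtain ⟨t, ht, hqt⟩ := Finset.mem_image.mp hx
    have ht' : t < s := Finset.mem_range.mp ht
    have hrw : IsWalk A s (fun u => q ((t + u) % s)) := by
      intro u hu
      beta_reduce
      have he : t + (u + 1) = (t + u) + 1 := by omega
      rw [he]
      exact hcyc (t + u)
    have hpos := pos_of_walk A hnonneg hrw
    have h00 : q ((t + 0) % s) = x := by
      rw [Nat.add_zero, Nat.mod_eq_of_lt ht', hqt]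
    have h11 : q ((t + s) % s) = x := by
      rw [Nat.add_mod_right, Nat.mod_eq_of_lt ht', hqt]
    rw [h00, h11] at hpos
    exact hpos
  -- from a cycle vertex, everything reachable in exactly n-1 steps of A^s
  obtain ⟨N, hN⟩ := qualitative A hnonneg hirr haper
  have hB : ∀ x ∈ C, ∀ j : Fin n, 0 < ((A ^ s) ^ (n - 1)) x j := by
    intro x hx j
    have hsk : N ≤ s * (N + 1) := by
      have h1 : 1 * (N + 1) ≤ s * (N + 1) := Nat.mul_le_mul_right _ hs1
      omega
    have h1 : 0 < (A ^ (s * (N + 1))) x j := hN (s * (N + 1)) hsk x j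
    rw [pow_mul] at h1
    obtain ⟨p, hp0, hpk, hpw⟩ := walk_of_pos (A ^ s) hBnn h1
    obtain ⟨k', hk'le, r, hr0, hrk, hrw⟩ := walk_shorten (A ^ s) hpw
    have hwpos := pos_of_walk (A ^ s) hBnn hrw
    rw [hr0, hrk, hp0, hpk] at hwpos
    have hlp := loop_pow (A ^ s) hBnn (hloop x hx) (n - 1 - k')
    have hcomp := pow_mul_pos (A ^ s) hBnn hlp hwpos
    have he : n - 1 - k' + k' = n - 1 := by omega
    rwa [he] at hcomp
  have hL : ∀ i j : Fin n, 0 < (A ^ ((n - s) + s * (n - 1))) i j := by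
    intro i j
    obtain ⟨x, hx, hix⟩ := hreach i
    have h2 := hB x hx j
    rw [← pow_mul] at h2
    exact pow_mul_pos A hnonneg hix h2
  have harith : n ^ 2 - 2 * n + 2 = ((n - s) + s * (n - 1)) + (n - 1 - s) * (n - 2) := by
    have e1 : 2 * n ≤ n ^ 2 := by nlinarith
    have e2 : s ≤ n := by omega
    have e3 : 1 ≤ n := by omega
    have e4 : s ≤ n - 1 := by omega
    have e5 : 2 ≤ n := hn2
    zify [e1, e2, e3, e4, e5]
    ring
  intro i j
  rw [harith]
  exact hpad _ hL _ i j
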